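/- In the probabilistic setting, if G is an AGEF property and s is a reachable state with p_s < 1, then there exists a finite path s t₁ s₁ ⋯ sₙ t_{n+1} s_{n+1} from s with p_{sᵢ} = p_s for i = 1,…,n and p_{s_{n+1}} < p_s. -/

import Mathlib

/-- A transition system: states `S`, transitions `Tr`, with source/target maps
and a set of initial states. -/
structure TS (S Tr : Type) where
  source : Tr → S
  target : Tr → S
  init : Set S

/-- A (finite or infinite) path in a transition system: `len` is the number of
transitions (`⊤` for an infinite path); states are indexed `0..len` and
transitions `0..len-1`. -/
structure TSPath {S Tr : Type} (G : TS S Tr) where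
  len : ℕ∞
  state : ℕ → S
  trans : ℕ → Tr
  src_ok : ∀ i : ℕ, (i : ℕ∞) < len → G.source (trans i) = state i
  tgt_ok : ∀ i : ℕ, (i : ℕ∞) < len → G.target (trans i) = state (i + 1)

variable {S Tr : Type}

/-- A task `T` is enabled in a state `s` if some transition in `T` has source `s`. -/
def TS.enabled (G : TS S Tr) (T : Set Tr) (s : S) : Prop :=
  ∃ t ∈ T, G.source t = s

/-- A path is rooted if it starts in an initial state. -/
def TSPath.rooted {G : TS S Tr} (π : TSPath G) : Prop :=
  π.state 0 ∈ G.init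

/-- The path visits the set of states `Ge`. -/
def TSPath.visits {G : TS S Tr} (π : TSPath G) (Ge : Set S) : Prop :=
  ∃ i : ℕ, (i : ℕ∞) ≤ π.len ∧ π.state i ∈ Ge

/-- The task `T` occurs in the suffix of `π` starting at index `k`. -/
def TSPath.occursFrom {G : TS S Tr} (π : TSPath G) (T : Set Tr) (k : ℕ) : Prop :=
  ∃ i : ℕ, k ≤ i ∧ (i : ℕ∞) < π.len ∧ π.trans i ∈ T

/-- `T` is perpetually enabled on the suffix of `π` starting at index `k`:
enabled in every state of that suffix. -/
def TSPath.perpEnabledFrom {G : TS S Tr} (π : TSPath G) (T : Set Tr) (k : ℕ) : Prop :=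
  ∀ i : ℕ, k ≤ i → (i : ℕ∞) ≤ π.len → G.enabled T (π.state i)

/-- `T` is relentlessly enabled on the suffix of `π` starting at index `k`:
every suffix of that suffix contains a state in which `T` is enabled. -/
def TSPath.relEnabledFrom {G : TS S Tr} (π : TSPath G) (T : Set Tr) (k : ℕ) : Prop :=
  ∀ j : ℕ, k ≤ j → (j : ℕ∞) ≤ π.len →
    ∃ i : ℕ, j ≤ i ∧ (i : ℕ∞) ≤ π.len ∧ G.enabled T (π.state i)

/-- Weak fairness: for every suffix, each task perpetually enabled on that
suffix occurs in it. -/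
def TSPath.weaklyFair {G : TS S Tr} (π : TSPath G) (𝒯 : Set (Set Tr)) : Prop :=
  ∀ T ∈ 𝒯, ∀ k : ℕ, (k : ℕ∞) ≤ π.len → π.perpEnabledFrom T k → π.occursFrom T k

/-- Strong fairness: for every suffix, each task relentlessly enabled on that
suffix occurs in it. -/
def TSPath.stronglyFair {G : TS S Tr} (π : TSPath G) (𝒯 : Set (Set Tr)) : Prop :=
  ∀ T ∈ 𝒯, ∀ k : ℕ, (k : ℕ∞) ≤ π.len → π.relEnabledFrom T k → π.occursFrom T k

/-- A path is progressing if it is infinite or its last state has no outgoing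
transition. -/
def TSPath.progressing {G : TS S Tr} (π : TSPath G) : Prop :=
  π.len = ⊤ ∨ ∃ n : ℕ, π.len = (n : ℕ∞) ∧ ∀ t : Tr, G.source t ≠ π.state n

/-- The end state of the finite run `l` started in state `s`. -/
def TS.runEnd (G : TS S Tr) : S → List Tr → S
  | s, [] => s
  | _, t :: l => TS.runEnd G (G.target t) l

/-- `l` is a run (a finite consecutive sequence of transitions) starting in `s`. -/
def TS.isRun (G : TS S Tr) : S → List Tr → Prop
  | _, [] => True
  | s, t :: l => G.source t = s ∧ TS.isRun G (G.target t) l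

/-- `s'` is reachable from `s`. -/
def TS.reaches (G : TS S Tr) (s s' : S) : Prop :=
  ∃ l : List Tr, G.isRun s l ∧ G.runEnd s l = s'

/-- `s` is reachable from some initial state. -/
def TS.reachable (G : TS S Tr) (s : S) : Prop :=
  ∃ s₀ ∈ G.init, G.reaches s₀ s

/-- `Ge` is an AGEF property: it is reachable from every state that is
reachable from an initial state. -/
def TS.AGEF (G : TS S Tr) (Ge : Set S) : Prop :=
  ∀ s : S, G.reachable s → ∃ g ∈ Ge, G.reaches s g

/-- Strong fairness of transitions: the tasks are all the singletons of
transitions. -/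
def TSPath.STfair {G : TS S Tr} (π : TSPath G) : Prop :=
  π.stronglyFair {T | ∃ t : Tr, T = {t}}

/-- The liveness property `Ge` holds under strong fairness of transitions. -/
def TS.holdsUnderST (G : TS S Tr) (Ge : Set S) : Prop :=
  ∀ π : TSPath G, π.rooted → π.STfair → π.visits Ge

/-- Every infinite rooted path that avoids `Ge` contains a state that is
visited infinitely often (equivalently, has a loop). -/
def TS.infAvoidingHasLoop (G : TS S Tr) (Ge : Set S) : Prop :=
  ∀ π : TSPath G, π.rooted → π.len = ⊤ → (∀ i : ℕ, π.state i ∉ Ge) →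
    ∃ s : S, ∀ m : ℕ, ∃ i : ℕ, m ≤ i ∧ π.state i = s

/-- A probabilistic interpretation of a transition system: each transition
gets a probability in `(0,1]`, and for every state with an outgoing
transition the probabilities of its outgoing transitions sum to 1. -/
def TS.isProbInterp (G : TS S Tr) (p : Tr → ENNReal) : Prop :=
  (∀ t : Tr, 0 < p t ∧ p t ≤ 1) ∧
  ∀ s : S, (∃ t : Tr, G.source t = s) →
    (∑' t : {t : Tr // G.source t = s}, p t.1) = 1

/-- The probability (weight) of a finite run: the product of the
probabilities of its transitions. -/
noncomputable def listWeight (p : Tr → ENNReal) (l : List Tr) : ENNReal :=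
  (l.map p).prod

/-- `l` is a run from `s` that ends in `Ge` without passing through `Ge` on
the way. -/
def TS.hitsFirst (G : TS S Tr) (Ge : Set S) (s : S) (l : List Tr) : Prop :=
  G.isRun s l ∧ G.runEnd s l ∈ Ge ∧
    ∀ l' : List Tr, l' <+: l → l' ≠ l → G.runEnd s l' ∉ Ge

/-- The probability of reaching `Ge` from `s`: the sum, over all runs from
`s` ending in `Ge` and not passing through `Ge` earlier, of their weights. -/
noncomputable def TS.probReach (G : TS S Tr) (Ge : Set S) (p : Tr → ENNReal) (s : S) : ENNReal :=
  ∑' l : {l : List Tr // G.hitsFirst Ge s l}, listWeight p l.1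

section Aux
variable {S Tr : Type}

lemma avg_step (G : TS S Tr) (Ge : Set S) (p : Tr → ENNReal) (hp : G.isProbInterp p)
    (pval : S → ENNReal)
    (havg : ∀ s : S, s ∉ Ge → (∃ t : Tr, G.source t = s) →
      pval s = ∑' t : {t : Tr // G.source t = s}, p t.1 * pval (G.target t.1))
    (u : S) (hu : u ∉ Ge) (hufin : pval u < 1)
    (t0 : Tr) (ht0 : G.source t0 = u) (hgt : pval u < pval (G.target t0)) :
    ∃ t' : Tr, G.source t' = u ∧ pval (G.target t') < pval u := by
  by_contra h
  push_neg at h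
  have hex : ∃ t : Tr, G.source t = u := ⟨t0, ht0⟩
  have key := havg u hu hex
  have hsum1 := hp.2 u hex
  have h1 : (∑' t : {t : Tr // G.source t = u}, p t.1 * pval u) = pval u := by
    rw [ENNReal.tsum_mul_right, hsum1, one_mul]
  have hlt : (∑' t : {t : Tr // G.source t = u}, p t.1 * pval u)
      < ∑' t : {t : Tr // G.source t = u}, p t.1 * pval (G.target t.1) := by
    refine ENNReal.tsum_lt_tsum (i := ⟨t0, ht0⟩) ?_ ?_ ?_
    · rw [h1]; exact (lt_of_lt_of_le hufin le_top).ne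
    · intro a
      exact mul_le_mul_right (h a.1 a.2) _
    · exact ENNReal.mul_lt_mul_right (hp.1 t0).1.ne'
        (lt_of_le_of_lt (hp.1 t0).2 ENNReal.one_lt_top).ne hgt
  rw [h1, ← key] at hlt
  exact lt_irrefl _ hlt

lemma descend_aux (G : TS S Tr) (Ge : Set S) (p : Tr → ENNReal) (hp : G.isProbInterp p)
    (pval : S → ENNReal)
    (hGe : ∀ s ∈ Ge, pval s = 1)
    (havg : ∀ s : S, s ∉ Ge → (∃ t : Tr, G.source t = s) →
      pval s = ∑' t : {t : Tr // G.source t = s}, p t.1 * pval (G.target t.1))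
    (c : ENNReal) (hc : c < 1) :
    ∀ (l : List Tr) (u : S), G.isRun u l → G.runEnd u l ∈ Ge → pval u = c →
    ∃ l' : List Tr, l' ≠ [] ∧ G.isRun u l' ∧
      (∀ l'' : List Tr, l'' <+: l' → l'' ≠ [] → l'' ≠ l' →
        pval (G.runEnd u l'') = c) ∧
      pval (G.runEnd u l') < c := by
  intro l
  induction l with
  | nil =>
    intro u _ hg hpu
    exact absurd (hpu ▸ hGe _ hg) hc.ne
  | cons t l ih =>
    intro u hrun hg hpu
    obtain ⟨hsrc, hrun'⟩ := hrun
    have hunot : u ∉ Ge := fun h => hc.ne (hpu ▸ hGe u h)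
    rcases lt_trichotomy (pval (G.target t)) c with hlt | heq | hgt
    · refine ⟨[t], by simp, ⟨hsrc, trivial⟩, ?_, ?_⟩
      · intro l'' hpre hne hnel
        exact absurd (hpre.eq_of_length (by
            have h1 := hpre.length_le
            have h2 : l'' ≠ [] := hne
            simp only [List.length_cons, List.length_nil] at h1
            cases l'' with
            | nil => exact absurd rfl h2
            | cons a l3 => simp only [List.length_cons, List.length_nil] at h1 ⊢; omega)) hnel
      · simpa [TS.runEnd] using hlt
    · obtain ⟨l₂, hne, hrun₂, hint, hfin⟩ := ih (G.target t) hrun' hg heq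
      refine ⟨t :: l₂, by simp, ⟨hsrc, hrun₂⟩, ?_, ?_⟩
      · intro l'' hpre hne' hnel
        rcases List.prefix_cons_iff.mp hpre with h | ⟨l₃, rfl, hl₃⟩
        · exact absurd h hne'
        · by_cases h3 : l₃ = []
          · subst h3; simpa [TS.runEnd] using heq
          · have : l₃ ≠ l₂ := fun h => hnel (by rw [h])
            simpa [TS.runEnd] using hint l₃ hl₃ h3 this
      · simpa [TS.runEnd] using hfin
    · obtain ⟨t', hsrc', hlt'⟩ := avg_step G Ge p hp pval havg u hunot (hpu ▸ hc)
        t hsrc (by rw [hpu]; exact hgt)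
      refine ⟨[t'], by simp, ⟨hsrc', trivial⟩, ?_, ?_⟩
      · intro l'' hpre hne hnel
        exact absurd (hpre.eq_of_length (by
            have h1 := hpre.length_le
            have h2 : l'' ≠ [] := hne
            simp only [List.length_cons, List.length_nil] at h1
            cases l'' with
            | nil => exact absurd rfl h2
            | cons a l3 => simp only [List.length_cons, List.length_nil] at h1 ⊢; omega)) hnel
      · simpa [TS.runEnd, hpu] using hlt'
end Aux

/-- If `Ge` is an AGEF property and `s` is a reachable state
with `pval s < 1`, then there is a nonempty finite path from `s` all of
whose intermediate states have value `pval s` and whose final state has a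
strictly smaller value. -/

theorem descending_path_exists (G : TS S Tr) (Ge : Set S)
    (p : Tr → ENNReal) (hp : G.isProbInterp p)
    (hcb : ∀ s : S, Set.Countable {t : Tr | G.source t = s})
    (pval : S → ENNReal)
    (hGe : ∀ s ∈ Ge, pval s = 1)
    (havg : ∀ s : S, s ∉ Ge → (∃ t : Tr, G.source t = s) →
      pval s = ∑' t : {t : Tr // G.source t = s}, p t.1 * pval (G.target t.1))
    (hAGEF : G.AGEF Ge) (s : S) (hreach : G.reachable s) (hs : pval s < 1) :
    ∃ l : List Tr, l ≠ [] ∧ G.isRun s l ∧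
      (∀ l' : List Tr, l' <+: l → l' ≠ [] → l' ≠ l →
        pval (G.runEnd s l') = pval s) ∧
      pval (G.runEnd s l) < pval s := by
  obtain ⟨g, hgGe, l, hrun, hend⟩ := hAGEF s hreach
  exact descend_aux G Ge p hp pval hGe havg (pval s) hs l s hrun (hend ▸ hgGe) rfl
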